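/- Let G be a graph, C a longest cycle of G with a fixed orientation, H a component of G − C, and v1, v2 distinct vertices on C each having a neighbor in H with |N_G(v1;H) ∪ N_G(v2;H)| ≥ 2. Then neither v1⁻v2⁻² nor v1⁺v2⁺² is an edge of G. -/

import Mathlib

open SimpleGraph

variable {V : Type*} [Fintype V] [DecidableEq V]

/-- `p 0, p 1, ..., p (n-1)` is a path of order `n` in `G`. -/
def IsPathOn (G : SimpleGraph V) (n : ℕ) (p : ℕ → V) : Prop :=
  (∀ i j, i < n → j < n → p i = p j → i = j) ∧
  (∀ i, i + 1 < n → G.Adj (p i) (p (i + 1)))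

/-- An induced path of order `n` in `G`. -/
def IsInducedPathOn (G : SimpleGraph V) (n : ℕ) (p : ℕ → V) : Prop :=
  IsPathOn G n p ∧ ∀ i j, i < n → j < n → G.Adj (p i) (p j) → (i + 1 = j ∨ j + 1 = i)

/-- `G` contains no induced path on 5 vertices. -/
def P5Free (G : SimpleGraph V) : Prop := ¬ ∃ p : ℕ → V, IsInducedPathOn G 5 p

/-- `G` contains no induced `K₄` minus an edge. -/
def K4mFree (G : SimpleGraph V) : Prop :=
  ¬ ∃ a b c d : V, a ≠ b ∧ a ≠ c ∧ a ≠ d ∧ b ≠ c ∧ b ≠ d ∧ c ≠ d ∧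
    G.Adj a b ∧ G.Adj a c ∧ G.Adj a d ∧ G.Adj b c ∧ G.Adj b d ∧ ¬ G.Adj c d

/-- `G` contains no induced `W*` (two triangles `abc`, `def` joined by the edge `cd`). -/
def WStarFree (G : SimpleGraph V) : Prop :=
  ¬ ∃ a b c d e f : V, List.Nodup [a, b, c, d, e, f] ∧
    G.Adj a b ∧ G.Adj b c ∧ G.Adj a c ∧ G.Adj d e ∧ G.Adj e f ∧ G.Adj d f ∧ G.Adj c d ∧
    ¬ G.Adj a d ∧ ¬ G.Adj a e ∧ ¬ G.Adj a f ∧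
    ¬ G.Adj b d ∧ ¬ G.Adj b e ∧ ¬ G.Adj b f ∧ ¬ G.Adj c e ∧ ¬ G.Adj c f

/-- `G` contains no induced paw (triangle `abc` with pendant edge `cd`). -/
def Z1Free (G : SimpleGraph V) : Prop :=
  ¬ ∃ a b c d : V, List.Nodup [a, b, c, d] ∧
    G.Adj a b ∧ G.Adj b c ∧ G.Adj a c ∧ G.Adj c d ∧ ¬ G.Adj a d ∧ ¬ G.Adj b d

/-- An (oriented) cycle of length `n` in `G`, as an injective map `ZMod n → V`
with consecutive vertices adjacent. -/
def IsCycleOn (G : SimpleGraph V) (n : ℕ) (c : ZMod n → V) : Prop :=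
  3 ≤ n ∧ Function.Injective c ∧ ∀ i, G.Adj (c i) (c (i + 1))

/-- A longest cycle of `G`. -/
def IsLongestCycle (G : SimpleGraph V) (n : ℕ) (c : ZMod n → V) : Prop :=
  IsCycleOn G n c ∧ ∀ (m : ℕ) (d : ZMod m → V), IsCycleOn G m d → m ≤ n

/-- A dominating cycle: every edge of `G` is incident with a vertex of the cycle. -/
def DominatingCycle (G : SimpleGraph V) (n : ℕ) (c : ZMod n → V) : Prop :=
  IsCycleOn G n c ∧ ∀ u v : V, G.Adj u v → u ∈ Set.range c ∨ v ∈ Set.range c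

/-- `H` is (the vertex set of) a connected component of `G - R`. -/
def IsCompOff (G : SimpleGraph V) (R : Set V) (H : Set V) : Prop :=
  H.Nonempty ∧ Disjoint H R ∧ (G.induce H).Connected ∧
  ∀ u v : V, u ∈ H → v ∉ H → v ∉ R → ¬ G.Adj u v

/-- `μ`: the maximum order of a component of `G - R`. -/
noncomputable def muC (G : SimpleGraph V) (R : Set V) : ℕ :=
  sSup {k | ∃ H : Set V, IsCompOff G R H ∧ H.ncard = k}

/-- `ω`: the number of components of `G - R` of maximum order. -/
noncomputable def omegaC (G : SimpleGraph V) (R : Set V) : ℕ :=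
  {H : Set V | IsCompOff G R H ∧ H.ncard = muC G R}.ncard

/-- `G` is 2-connected: at least 3 vertices, connected, and removing any
vertex leaves it connected. -/
def TwoConnected (G : SimpleGraph V) : Prop :=
  3 ≤ Fintype.card V ∧ G.Connected ∧
  ∀ v : V, (G.induce ({v}ᶜ : Set V)).Connected

/-- The set of indices of `ZMod n` encountered going from `s` to `t` in the
positive direction (including both `s` and `t`). -/
def seg (n : ℕ) (s t : ZMod n) : Set (ZMod n) :=
  {x | ∃ k : ℕ, x = s + (k : ZMod n) ∧ ∀ m : ℕ, m < k → s + (m : ZMod n) ≠ t}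

/-- `G` is complete multipartite: the vertices partition into classes of an
equivalence relation which are independent, with all edges between classes. -/
def CompleteMultipartite (G : SimpleGraph V) : Prop :=
  ∃ r : V → V → Prop, Equivalence r ∧ ∀ u v : V, u ≠ v → (G.Adj u v ↔ ¬ r u v)

/-- A `C`-path (for `R = V(C)`): a path of order at least 2 whose ends lie in
`R` and whose internal vertices avoid `R`. -/
def IsCPath (G : SimpleGraph V) (R : Set V) (m : ℕ) (p : ℕ → V) : Prop :=
  2 ≤ m ∧ IsPathOn G m p ∧ p 0 ∈ R ∧ p (m - 1) ∈ R ∧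
  ∀ i, 0 < i → i < m - 1 → p i ∉ R


set_option linter.unusedSectionVars false in
lemma aux_path_in_set (G : SimpleGraph V) (H : Set V) (hconn : (G.induce H).Connected)
    {x1 x2 : V} (h1 : x1 ∈ H) (h2 : x2 ∈ H) :
    ∃ (ℓ : ℕ) (p : ℕ → V), 1 ≤ ℓ ∧ p 0 = x1 ∧ p (ℓ - 1) = x2 ∧
      (∀ k, k < ℓ → p k ∈ H) ∧
      (∀ i j, i < ℓ → j < ℓ → p i = p j → i = j) ∧
      (∀ i, i + 1 < ℓ → G.Adj (p i) (p (i + 1))) := by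
  obtain ⟨w⟩ := hconn.preconnected ⟨x1, h1⟩ ⟨x2, h2⟩
  set q := w.toPath with hq
  set L : List ↥H := q.1.support with hL
  have hnil : L ≠ [] := q.1.support_ne_nil
  have hlen : 1 ≤ L.length := List.length_pos_iff.2 hnil
  refine ⟨L.length, fun k => if h : k < L.length then (L.get ⟨k, h⟩).1 else x1, hlen, ?_, ?_, ?_, ?_, ?_⟩
  · simp only [dif_pos (by omega : 0 < L.length)]
    have h0 : L.get ⟨0, by omega⟩ = (⟨x1, h1⟩ : ↥H) := by
      simp only [List.get_eq_getElem]; rw [← List.head_eq_getElem_zero hnil]; exact q.1.head_support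
    exact congrArg Subtype.val h0
  · simp only [dif_pos (by omega : L.length - 1 < L.length)]
    have h0 : L.get ⟨L.length - 1, by omega⟩ = (⟨x2, h2⟩ : ↥H) := by
      simp only [List.get_eq_getElem]; rw [← List.getLast_eq_getElem (l:=L) hnil]; exact q.1.getLast_support
    exact congrArg Subtype.val h0
  · intro k hk
    simp only [dif_pos hk]
    exact (L.get ⟨k, hk⟩).2
  · intro i j hi hj hij
    simp only [dif_pos hi, dif_pos hj] at hij
    have hnd : L.Nodup := q.2.support_nodup
    have := List.nodup_iff_injective_get.1 hnd (Subtype.ext hij : L.get ⟨i, hi⟩ = L.get ⟨j, hj⟩)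
    exact congrArg Fin.val this
  · intro i hi
    simp only [dif_pos (by omega : i < L.length), dif_pos hi]
    have hchain : List.IsChain (G.induce H).Adj L := q.1.isChain_adj_support
    have := List.isChain_iff_getElem.1 hchain i (by omega)
    simpa [SimpleGraph.comap_adj] using this

lemma aux_key (G : SimpleGraph V) (n : ℕ) (c : ZMod n → V) (hc : IsLongestCycle G n c)
    (H : Set V) (hdis : Disjoint H (Set.range c)) (hconn : (G.induce H).Connected)
    (i1 i2 : ZMod n) (x1 x2 : V) (hx1 : x1 ∈ H) (hx2 : x2 ∈ H) (hx12 : x1 ≠ x2)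
    (ha1 : G.Adj (c i1) x1) (ha2 : G.Adj (c i2) x2) (hne12 : i1 ≠ i2) :
    ¬ G.Adj (c (i1 - 1)) (c (i2 - 2)) := by
  intro hadj
  obtain ⟨⟨hn3, hcinj, hcadj⟩, hmax⟩ := hc
  haveI : NeZero n := ⟨by omega⟩
  set t := (i2 - i1).val with ht
  have htn : t < n := ZMod.val_lt _
  have htc : ((t : ℕ) : ZMod n) = i2 - i1 := ZMod.natCast_rightInverse _
  have ht0 : t ≠ 0 := by
    intro h
    apply hne12
    have h2 : i2 - i1 = 0 := by rw [← htc, h]; norm_num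
    have := sub_eq_zero.mp h2
    exact this.symm
  have ht2 : 2 ≤ t := by
    by_contra h
    have h1 : t = 1 := by omega
    have h2 : i2 - i1 = 1 := by rw [← htc, h1]; norm_num
    have h3 : i1 - 1 = i2 - 2 := by linear_combination -h2
    rw [h3] at hadj
    exact hadj.ne rfl
  obtain ⟨ℓ, p, hl1, hp0, hpl, hpH, hpinj, hpadj⟩ := aux_path_in_set G H hconn hx1 hx2
  have hl2 : 2 ≤ ℓ := by
    by_contra h
    have : ℓ = 1 := by omega
    apply hx12
    rw [← hp0, ← hpl, this]
  set m := n - 1 + ℓ with hm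
  haveI : NeZero m := ⟨by omega⟩
  set e : ℕ → ℕ := fun k => if k < n - t then k else 2*n - t - 2 - k with he
  set f : ℕ → V := fun k => if k < n - 1 then c (i2 + ((e k : ℕ) : ZMod n)) else p (k - (n - 1)) with hf
  have hcastinj : ∀ a b : ℕ, a < n → b < n → ((a : ZMod n) = (b : ZMod n)) → a = b := by
    intro a b ha hb hab
    have := congrArg ZMod.val hab
    rwa [ZMod.val_cast_of_lt ha, ZMod.val_cast_of_lt hb] at this
  have hek : ∀ k, k < n - 1 → e k < n - 1 := by
    intro k hk; simp only [he]; split <;> omega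
  have hfinj : ∀ k k', k < m → k' < m → f k = f k' → k = k' := by
    intro k k' hk hk' hkk
    simp only [hf] at hkk
    by_cases h1 : k < n - 1 <;> by_cases h2 : k' < n - 1 <;>
      simp only [if_pos, if_neg, h1, h2, if_true, if_false] at hkk
    · have hval : ((e k : ℕ) : ZMod n) = ((e k' : ℕ) : ZMod n) := by
        have := hcinj hkk
        linear_combination this
      have hee : e k = e k' :=
        hcastinj _ _ (by have := hek k h1; omega) (by have := hek k' h2; omega) hval
      simp only [he] at hee
      rcases Nat.lt_or_ge k (n - t) with hx | hx <;> rcases Nat.lt_or_ge k' (n - t) with hy | hy <;>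
        simp only [if_pos, if_neg, hx, hy, not_lt, if_true, if_false] at hee <;> omega
    · exfalso
      have hmem : p (k' - (n - 1)) ∈ H := hpH _ (by omega)
      have : p (k' - (n - 1)) ∈ Set.range c := ⟨_, hkk⟩
      exact Set.disjoint_left.mp hdis hmem this
    · exfalso
      have hmem : p (k - (n - 1)) ∈ H := hpH _ (by omega)
      have : p (k - (n - 1)) ∈ Set.range c := ⟨_, hkk.symm⟩
      exact Set.disjoint_left.mp hdis hmem this
    · have := hpinj (k - (n - 1)) (k' - (n - 1)) (by omega) (by omega) hkk
      omega
  have hcast1 : ((n - t - 1 : ℕ) : ZMod n) = 0 - ((t : ℕ) : ZMod n) - 1 := by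
    rw [Nat.cast_sub (by omega : 1 ≤ n - t), Nat.cast_sub (by omega : t ≤ n)]
    simp [ZMod.natCast_self]
  have hcast2 : ((n - 2 : ℕ) : ZMod n) = -2 := by
    rw [Nat.cast_sub (by omega : 2 ≤ n)]
    simp [ZMod.natCast_self]
  have hcast3 : ((n - t : ℕ) : ZMod n) = 0 - ((t : ℕ) : ZMod n) := by
    rw [Nat.cast_sub (by omega : t ≤ n)]
    simp [ZMod.natCast_self]
  have hstep : ∀ k, k + 1 < m → G.Adj (f k) (f (k + 1)) := by
    intro k hk1
    rcases Nat.lt_trichotomy (k + 1) (n - 1) with hA | hA | hA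
    · rcases Nat.lt_trichotomy (k + 1) (n - t) with hB | hB | hB
      · have hek1 : e k = k := by simp only [he]; rw [if_pos (by omega)]
        have hek2 : e (k + 1) = k + 1 := by simp only [he]; rw [if_pos hB]
        simp only [hf, if_pos (by omega : k < n - 1), if_pos hA, hek1, hek2]
        have := hcadj (i2 + ((k : ℕ) : ZMod n))
        convert this using 2
        push_cast
        ring
      · have hek1 : e k = n - t - 1 := by simp only [he]; rw [if_pos (by omega)]; omega
        have hek2 : e (k + 1) = n - 2 := by simp only [he]; rw [if_neg (by omega)]; omega
        simp only [hf, if_pos (by omega : k < n - 1), if_pos hA, hek1, hek2]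
        have e1 : i2 + ((n - t - 1 : ℕ) : ZMod n) = i1 - 1 := by
          rw [hcast1, htc]; ring
        have e2 : i2 + ((n - 2 : ℕ) : ZMod n) = i2 - 2 := by
          rw [hcast2]; ring
        rw [e1, e2]
        exact hadj
      · have hek1 : e k = 2*n - t - 2 - k := by simp only [he]; rw [if_neg (by omega)]
        have hek2 : e (k + 1) = 2*n - t - 2 - (k + 1) := by simp only [he]; rw [if_neg (by omega)]
        simp only [hf, if_pos (by omega : k < n - 1), if_pos hA, hek1, hek2]
        have := (hcadj (i2 + ((2*n - t - 2 - (k + 1) : ℕ) : ZMod n))).symm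
        convert this using 2
        have hnum : 2*n - t - 2 - k = (2*n - t - 2 - (k + 1)) + 1 := by omega
        rw [hnum]
        push_cast
        ring
    · have hkn2 : k = n - 2 := by omega
      have hek1 : e k = n - t := by simp only [he]; rw [if_neg (by omega)]; omega
      simp only [hf, if_pos (by omega : k < n - 1), if_neg (by omega : ¬ (k + 1 < n - 1)), hek1]
      have e1 : i2 + ((n - t : ℕ) : ZMod n) = i1 := by
        rw [hcast3, htc]; ring
      have e2 : k + 1 - (n - 1) = 0 := by omega
      rw [e1, e2, hp0]
      exact ha1
    · simp only [hf, if_neg (by omega : ¬ (k < n - 1)), if_neg (by omega : ¬ (k + 1 < n - 1))]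
      have e2 : k + 1 - (n - 1) = (k - (n - 1)) + 1 := by omega
      rw [e2]
      exact hpadj _ (by omega)
  set d : ZMod m → V := fun i => f i.val with hd
  have hcyc : IsCycleOn G m d := by
    refine ⟨by omega, ?_, ?_⟩
    · intro i j hij
      have := hfinj i.val j.val (ZMod.val_lt i) (ZMod.val_lt j) hij
      exact ZMod.val_injective m this
    · intro i
      have hk : i.val < m := ZMod.val_lt i
      have hval : (i + 1).val = (i.val + 1) % m := by
        have h1 : i + 1 = ((i.val + 1 : ℕ) : ZMod m) := by
          push_cast
          rw [ZMod.natCast_rightInverse i]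
        rw [h1, ZMod.val_natCast]
      by_cases hk1 : i.val + 1 < m
      · have : (i + 1).val = i.val + 1 := by rw [hval, Nat.mod_eq_of_lt hk1]
        show G.Adj (f i.val) (f (i + 1).val)
        rw [this]
        exact hstep _ hk1
      · have hlast : i.val = m - 1 := by omega
        have : (i + 1).val = 0 := by rw [hval, hlast]; simp [Nat.sub_add_cancel (by omega : 1 ≤ m)]
        show G.Adj (f i.val) (f (i + 1).val)
        rw [this, hlast]
        have hf1 : f (m - 1) = x2 := by
          simp only [hf, if_neg (by omega : ¬ (m - 1 < n - 1))]
          rw [show m - 1 - (n - 1) = ℓ - 1 by omega, hpl]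
        have hf0 : f 0 = c i2 := by
          simp only [hf, if_pos (by omega : (0:ℕ) < n - 1)]
          have : e 0 = 0 := by simp only [he]; rw [if_pos (by omega)]
          rw [this]
          norm_num
        rw [hf1, hf0]
        exact ha2.symm
  have := hmax m d hcyc
  omega

set_option linter.unusedSectionVars false in
lemma aux_choose_two {S1 S2 : Set V} (h1 : S1.Nonempty) (h2 : S2.Nonempty)
    (hcard : 2 ≤ (S1 ∪ S2).ncard) : ∃ a ∈ S1, ∃ b ∈ S2, a ≠ b := by
  have hfin : (S1 ∪ S2).Finite := Set.toFinite _
  obtain ⟨a, b, ha, hb, hab⟩ := (Set.one_lt_ncard_iff hfin).1 (by omega)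
  rw [Set.mem_union] at ha hb
  rcases ha with ha | ha <;> rcases hb with hb | hb
  · obtain ⟨y, hy⟩ := h2
    by_cases hya : y = a
    · exact ⟨b, hb, y, hy, by rw [hya]; exact fun h => hab h.symm⟩
    · exact ⟨a, ha, y, hy, fun h => hya (h.symm)⟩
  · exact ⟨a, ha, b, hb, hab⟩
  · exact ⟨b, hb, a, ha, fun h => hab h.symm⟩
  · obtain ⟨y, hy⟩ := h1
    by_cases hyb : y = b
    · exact ⟨y, hy, a, ha, by rw [hyb]; exact fun h => hab h.symm⟩
    · exact ⟨y, hy, b, hb, hyb⟩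

theorem stmt_17 (G : SimpleGraph V) (n : ℕ) (c : ZMod n → V)
    (hc : IsLongestCycle G n c)
    (H : Set V) (hH : IsCompOff G (Set.range c) H)
    (i1 i2 : ZMod n) (hne : c i1 ≠ c i2)
    (h1 : ∃ x ∈ H, G.Adj (c i1) x) (h2 : ∃ x ∈ H, G.Adj (c i2) x)
    (hcard : 2 ≤ ({x | x ∈ H ∧ G.Adj (c i1) x} ∪ {x | x ∈ H ∧ G.Adj (c i2) x}).ncard) :
    ¬ G.Adj (c (i1 - 1)) (c (i2 - 2)) ∧ ¬ G.Adj (c (i1 + 1)) (c (i2 + 2)) := by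
  have h1' : ({x | x ∈ H ∧ G.Adj (c i1) x}).Nonempty := by
    obtain ⟨x, hx, hax⟩ := h1; exact ⟨x, hx, hax⟩
  have h2' : ({x | x ∈ H ∧ G.Adj (c i2) x}).Nonempty := by
    obtain ⟨x, hx, hax⟩ := h2; exact ⟨x, hx, hax⟩
  obtain ⟨a, ⟨haH, haa⟩, b, ⟨hbH, hba⟩, hab⟩ := aux_choose_two h1' h2' hcard
  have hne12 : i1 ≠ i2 := fun h => hne (by rw [h])
  have hdis : Disjoint H (Set.range c) := hH.2.1
  have hconn : (G.induce H).Connected := hH.2.2.1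
  constructor
  · exact aux_key G n c hc H hdis hconn i1 i2 a b haH hbH hab haa hba hne12
  · have hc' : IsLongestCycle G n (fun i => c (-i)) := by
      obtain ⟨⟨hn3, hcinj, hcadj⟩, hmax⟩ := hc
      refine ⟨⟨hn3, ?_, ?_⟩, hmax⟩
      · intro x y hxy
        exact neg_injective (hcinj hxy)
      · intro i
        show G.Adj (c (-i)) (c (-(i+1)))
        have h0 := hcadj (-i - 1)
        rw [show -i - 1 + 1 = -i by ring] at h0
        rw [show -(i+1) = -i - 1 by ring]
        exact h0.symm
    have hdis' : Disjoint H (Set.range (fun i => c (-i))) := by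
      refine hdis.mono_right ?_
      rintro x ⟨i, rfl⟩
      exact ⟨-i, rfl⟩
    have hres := aux_key G n (fun i => c (-i)) hc' H hdis' hconn (-i1) (-i2) a b haH hbH hab
      (by simpa using haa) (by simpa using hba) (by simpa using hne12)
    simpa [show -(-i1 - 1) = i1 + 1 by ring, show -(-i2 - 2) = i2 + 2 by ring] using hres
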